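/- Let Y₁,...,Y_d be i.i.d. random variables taking values ±1 with P(Y_i = 1) = p. If d = 2 and p ≥ 4/9, then the random variable Bin(∑_{i=1}^2 (Y_i + 1), 1/2) (a binomial thinning with parameter 1/2 of the sum ∑(Y_i+1)) is log-concave. -/
import Mathlib


/-- No internal zeros in the sequence `P`. -/
def NoInternalZeros (P : ℕ → ℝ) : Prop :=
  ∀ i j k : ℕ, i ≤ j → j ≤ k → 0 < P i → 0 < P k → 0 < P j

/-- A distribution on ℕ is log-concave: no internal zeros and
`P (n-1) * P (n+1) ≤ (P n)^2` for all `n ≥ 1`. -/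
def LogConcavePMF (P : ℕ → ℝ) : Prop :=
  NoInternalZeros P ∧ ∀ n : ℕ, 1 ≤ n → P (n - 1) * P (n + 1) ≤ (P n) ^ 2

/-- The mass function of `Bin(∑_{i=1}^2 (Y_i + 1), 1/2)`, where `Y₁, Y₂` are i.i.d. `±1`
with `P(Y_i = 1) = p`: the sum `S = (Y₁+1)+(Y₂+1)` equals `0, 2, 4` with probabilities
`(1-p)², 2p(1-p), p²`, and the result is a binomial thinning of `S` with parameter `1/2`. -/
noncomputable def thinnedPMF (p : ℝ) : ℕ → ℝ := fun k =>
  (1 - p) ^ 2 * (if k = 0 then 1 else 0)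
    + 2 * p * (1 - p) * ((Nat.choose 2 k : ℝ) * (1 / 2) ^ 2)
    + p ^ 2 * ((Nat.choose 4 k : ℝ) * (1 / 2) ^ 4)

/-- For `d = 2` i.i.d. `±1` random variables `Y₁, Y₂` with
`P(Y_i = 1) = p ≥ 4/9`, the random variable `Bin((Y₁+1)+(Y₂+1), 1/2)` is log-concave. -/
theorem stmt3 (p : ℝ) (hp : 4 / 9 ≤ p) (hp1 : p ≤ 1) :
    LogConcavePMF (thinnedPMF p) := by
  have hp0 : (0:ℝ) < p := by linarith
  have hpos : ∀ j : ℕ, j ≤ 4 → 0 < thinnedPMF p j := by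
    intro j hj
    interval_cases j <;> norm_num [thinnedPMF, Nat.choose] <;> nlinarith [sq_nonneg (1 - p), sq_nonneg p]
  have hzero : ∀ k : ℕ, 5 ≤ k → thinnedPMF p k = 0 := by
    intro k hk
    have h2 : Nat.choose 2 k = 0 := Nat.choose_eq_zero_of_lt (by omega)
    have h4 : Nat.choose 4 k = 0 := Nat.choose_eq_zero_of_lt (by omega)
    have hk0 : k ≠ 0 := by omega
    simp [thinnedPMF, h2, h4, hk0]
  constructor
  · intro i j k hij hjk hi hk
    have hk4 : k ≤ 4 := by
      by_contra h
      push_neg at h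
      rw [hzero k (by omega)] at hk
      exact lt_irrefl 0 hk
    exact hpos j (le_trans hjk hk4)
  · intro n hn
    rcases le_or_gt 4 n with h4 | h4
    · rw [hzero (n + 1) (by omega), mul_zero]
      exact sq_nonneg _
    · interval_cases n <;>
        norm_num [thinnedPMF, Nat.choose] <;>
        nlinarith [mul_nonneg (mul_nonneg hp0.le (by linarith : (0:ℝ) ≤ 9*p-4))
          (sq_nonneg (3*p-4)), sq_nonneg (1-p), sq_nonneg p, mul_nonneg hp0.le hp0.le]
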